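/- Let 0 ≤ β₁ < 1 and let g₁, …, g_T ∈ ℝ^d. Define m₀ = 0 and m_t = β₁·m_{t−1} + (1−β₁)·g_t for t ≥ 1. Then Σ_{t=1}^T ‖m_t‖² ≤ Σ_{t=1}^T ‖g_t‖², where ‖·‖ is the Euclidean norm on ℝ^d. -/
import Mathlib

lemma ema_convex_sq {E : Type*} [SeminormedAddCommGroup E] [NormedSpace ℝ E]
    (b : ℝ) (hb0 : 0 ≤ b) (hb1 : b ≤ 1) (x y : E) :
    ‖b • x + (1 - b) • y‖ ^ 2 ≤ b * ‖x‖ ^ 2 + (1 - b) * ‖y‖ ^ 2 := by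
  have h1 : ‖b • x + (1 - b) • y‖ ≤ b * ‖x‖ + (1 - b) * ‖y‖ := by
    calc ‖b • x + (1 - b) • y‖ ≤ ‖b • x‖ + ‖(1 - b) • y‖ := norm_add_le _ _
    _ = b * ‖x‖ + (1 - b) * ‖y‖ := by
        rw [norm_smul, norm_smul, Real.norm_of_nonneg hb0,
          Real.norm_of_nonneg (by linarith)]
  have h2 : (b * ‖x‖ + (1 - b) * ‖y‖) ^ 2 ≤ b * ‖x‖ ^ 2 + (1 - b) * ‖y‖ ^ 2 := by
    nlinarith [sq_nonneg (‖x‖ - ‖y‖), mul_nonneg hb0 (by linarith : (0:ℝ) ≤ 1 - b)]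
  calc ‖b • x + (1 - b) • y‖ ^ 2 ≤ (b * ‖x‖ + (1 - b) * ‖y‖) ^ 2 := by
        apply pow_le_pow_left₀ (norm_nonneg _) h1
  _ ≤ _ := h2

/-- For the exponential moving average `m_t = β₁·m_{t-1} + (1-β₁)·g_t` with `m₀ = 0`
and `0 ≤ β₁ < 1`, we have `Σ_{t=1}^T ‖m_t‖² ≤ Σ_{t=1}^T ‖g_t‖²`. -/
theorem ema_sum_sq_norm_le
    (d T : ℕ) (beta1 : ℝ) (h0 : 0 ≤ beta1) (h1 : beta1 < 1)
    (g m : ℕ → EuclideanSpace ℝ (Fin d))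
    (hm0 : m 0 = 0)
    (hm : ∀ t, 1 ≤ t → m t = beta1 • m (t - 1) + (1 - beta1) • g t) :
    ∑ t ∈ Finset.Icc 1 T, ‖m t‖ ^ 2 ≤ ∑ t ∈ Finset.Icc 1 T, ‖g t‖ ^ 2 := by
  set c : ℝ := beta1 / (1 - beta1) with hc
  have hb1 : (0:ℝ) < 1 - beta1 := by linarith
  have hcnn : 0 ≤ c := div_nonneg h0 hb1.le
  have key : ∀ t, 1 ≤ t → ‖m t‖ ^ 2 ≤ beta1 * ‖m (t-1)‖ ^ 2 + (1 - beta1) * ‖g t‖ ^ 2 := by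
    intro t ht
    rw [hm t ht]
    exact ema_convex_sq beta1 h0 h1.le _ _
  have strong : ∀ N, ∑ t ∈ Finset.Icc 1 N, ‖m t‖ ^ 2 + c * ‖m N‖ ^ 2 ≤
      ∑ t ∈ Finset.Icc 1 N, ‖g t‖ ^ 2 := by
    intro N
    induction N with
    | zero => simp [hm0]
    | succ n ih =>
      rw [Finset.sum_Icc_succ_top (by omega), Finset.sum_Icc_succ_top (by omega)]
      have hcb : c * (1 - beta1) = beta1 := div_mul_cancel₀ _ hb1.ne'
      have hk := key (n+1) (by omega)
      simp only [Nat.add_sub_cancel] at hk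
      have hexp : ‖m (n+1)‖ ^ 2 + c * ‖m (n+1)‖ ^ 2 ≤ c * ‖m n‖ ^ 2 + ‖g (n+1)‖ ^ 2 := by
        have : (1 + c) * ‖m (n+1)‖ ^ 2 ≤ (1 + c) * (beta1 * ‖m n‖ ^ 2 + (1 - beta1) * ‖g (n+1)‖ ^ 2) := by
          apply mul_le_mul_of_nonneg_left hk (by linarith)
        have heq : (1 + c) * (beta1 * ‖m n‖ ^ 2 + (1 - beta1) * ‖g (n+1)‖ ^ 2)
            = c * ‖m n‖ ^ 2 + ‖g (n+1)‖ ^ 2 := by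
          linear_combination (‖g (n+1)‖ ^ 2 - ‖m n‖ ^ 2) * hcb
        nlinarith [this, heq]
      linarith [ih]
  have := strong T
  nlinarith [mul_nonneg hcnn (sq_nonneg ‖m T‖)]
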